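/- For every peak composition α of n, the quasisymmetric Schur Q-function satisfies QSQ_α = Σ_{T ∈ SPIT(α)} K_{comp(Peak(Des(w_r(T))))} (an identity of formal power series); that is, QSQ_α is also equal to the K-generating function of standard peak immaculate tableaux computed with the row reading word w_r in place of the column reading word w_c. -/

import Mathlib

namespace PaperSPIT

/-- The `j`-th part (1-indexed) of a composition presented as a list. -/
def part (α : List ℕ) (j : ℕ) : ℕ := α.getD (j - 1) 0

/-- The largest part. -/
def maxPart (α : List ℕ) : ℕ := α.foldr max 0

/-- The composition diagram: boxes `(i, j)` (column `i`, row `j`), both 1-indexed,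
rows numbered from bottom to top. -/
def cd (α : List ℕ) : Finset (ℕ × ℕ) :=
  (Finset.Icc 1 (maxPart α) ×ˢ Finset.Icc 1 α.length).filter fun p => p.1 ≤ part α p.2

/-- `α` is a composition of `n`. -/
def IsComposition (n : ℕ) (α : List ℕ) : Prop :=
  (∀ a ∈ α, 0 < a) ∧ α.sum = n

/-- `α` is a peak composition of `n`: all parts except possibly the last are `> 1`. -/
def IsPeakComposition (n : ℕ) (α : List ℕ) : Prop :=
  IsComposition n α ∧ ∀ i, i + 1 < α.length → 1 < α.getD i 0

/-- A standard filling of `cd α`: a bijection from the boxes onto `{1, …, n}`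
(normalized to be `0` off the diagram). -/
def IsStandardFilling (α : List ℕ) (T : ℕ × ℕ → ℕ) : Prop :=
  Set.BijOn T (cd α : Set (ℕ × ℕ)) (Set.Icc 1 α.sum) ∧
  ∀ p : ℕ × ℕ, p ∉ cd α → T p = 0

def RowsIncrease (α : List ℕ) (T : ℕ × ℕ → ℕ) : Prop :=
  ∀ i j : ℕ, (i, j) ∈ cd α → (i + 1, j) ∈ cd α → T (i, j) < T (i + 1, j)

def RowsWeaklyIncrease (α : List ℕ) (T : ℕ × ℕ → ℕ) : Prop :=
  ∀ i j : ℕ, (i, j) ∈ cd α → (i + 1, j) ∈ cd α → T (i, j) ≤ T (i + 1, j)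

def FirstColIncreases (α : List ℕ) (T : ℕ × ℕ → ℕ) : Prop :=
  ∀ j : ℕ, (1, j) ∈ cd α → (1, j + 1) ∈ cd α → T (1, j) < T (1, j + 1)

/-- Standard immaculate tableau. -/
def IsSIT (α : List ℕ) (T : ℕ × ℕ → ℕ) : Prop :=
  IsStandardFilling α T ∧ RowsIncrease α T ∧ FirstColIncreases α T

/-- Peak-tableau condition: for every `1 ≤ k ≤ n` the boxes with entries `≤ k`
form the diagram of a peak composition. -/
def PeakCond (α : List ℕ) (T : ℕ × ℕ → ℕ) : Prop :=
  ∀ k : ℕ, 1 ≤ k → k ≤ α.sum → ∃ β : List ℕ,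
    IsPeakComposition k β ∧ (cd α).filter (fun p => T p ≤ k) = cd β

/-- Standard peak immaculate tableau. -/
def IsSPIT (α : List ℕ) (T : ℕ × ℕ → ℕ) : Prop := IsSIT α T ∧ PeakCond α T

def SPITset (α : List ℕ) : Set (ℕ × ℕ → ℕ) := {T | IsSPIT α T}

/-- The Young triple condition. -/
def YoungTriple (α : List ℕ) (T : ℕ × ℕ → ℕ) : Prop :=
  ∀ k i j : ℕ, i < j → (k, j) ∈ cd α → (k + 1, i) ∈ cd α → T (k, j) ≤ T (k + 1, i) →
    (k + 1, j) ∈ cd α ∧ T (k + 1, j) < T (k + 1, i)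

/-- Standard Young composition tableau. -/
def IsSYCT (α : List ℕ) (T : ℕ × ℕ → ℕ) : Prop :=
  IsStandardFilling α T ∧ RowsIncrease α T ∧ FirstColIncreases α T ∧ YoungTriple α T

def SYCTset (α : List ℕ) : Set (ℕ × ℕ → ℕ) := {T | IsSYCT α T}

/-- Standard peak Young composition tableau. -/
def IsSPYCT (α : List ℕ) (T : ℕ × ℕ → ℕ) : Prop := IsSYCT α T ∧ PeakCond α T

def SPYCTset (α : List ℕ) : Set (ℕ × ℕ → ℕ) := {T | IsSPYCT α T}

/-- Row reading word `w_r`: rows from top to bottom, each row left to right. -/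
def wR (α : List ℕ) (T : ℕ × ℕ → ℕ) : List ℕ :=
  ((List.range α.length).reverse.map fun j =>
    (List.range (part α (j + 1))).map fun i => T (i + 1, j + 1)).flatten

/-- The `i`-th column of a filling, read bottom to top. -/
def colList (α : List ℕ) (T : ℕ × ℕ → ℕ) (i : ℕ) : List ℕ :=
  ((List.range α.length).filter fun j => decide (i ≤ part α (j + 1))).map
    fun j => T (i, j + 1)

/-- Column reading word `w_c`: columns left to right, each column bottom to top. -/
def wC (α : List ℕ) (T : ℕ × ℕ → ℕ) : List ℕ :=
  ((List.range (maxPart α)).map fun i => colList α T (i + 1)).flatten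

/-- Young reading word `w_Y`: first column top to bottom, then subsequent columns
bottom to top, columns left to right. -/
def wY (α : List ℕ) (T : ℕ × ℕ → ℕ) : List ℕ :=
  (colList α T 1).reverse ++
    ((List.range (maxPart α - 1)).map fun i => colList α T (i + 2)).flatten

/-- Descent set of a word with distinct letters: `i` such that `i` and `i+1` occur
and `i` occurs to the right of `i+1`. -/
def DesWord (w : List ℕ) : Finset ℕ :=
  w.toFinset.filter fun i => (i + 1) ∈ w ∧ w.idxOf (i + 1) < w.idxOf i


def setComp (α : List ℕ) : Finset ℕ :=
  (((α.scanl (· + ·) 0).drop 1).dropLast).toFinset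

def compOf (n : ℕ) (I : Finset ℕ) : List ℕ :=
  List.zipWith (fun a b => a - b) (I.sort (· ≤ ·) ++ [n]) (0 :: I.sort (· ≤ ·))

def PeakSet (X : Finset ℕ) : Finset ℕ := X.filter fun i => 1 < i ∧ i - 1 ∉ X

noncomputable def Fqs (n : ℕ) (α : List ℕ) : MvPowerSeries ℕ ℤ := fun d =>
  (Set.ncard {f : Fin n → ℕ |
      (∀ j, 1 ≤ f j) ∧ Monotone f ∧
      (∀ j k : Fin n, (k : ℕ) = (j : ℕ) + 1 → ((j : ℕ) + 1) ∈ setComp α → f j < f k) ∧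
      ∀ m : ℕ, d m = (Finset.univ.filter fun j : Fin n => f j = m).card} : ℤ)

noncomputable def Kqs (n : ℕ) (α : List ℕ) : MvPowerSeries ℕ ℤ :=
  (2 ^ ((setComp α).card + 1) : ℕ) •
    ∑ β : Composition n,
      if setComp α ⊆ symmDiff (setComp β.blocks) ((setComp β.blocks).image (· + 1))
      then Fqs n β.blocks else 0

/-- The quasisymmetric Schur `Q`-function of a peak composition `α` of `n`. -/
noncomputable def QSQ (n : ℕ) (α : List ℕ) : MvPowerSeries ℕ ℤ :=
  ∑ᶠ T ∈ SPITset α, Kqs n (compOf n (PeakSet (DesWord (wC α T))))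

/-- The peak Young quasisymmetric Schur function of a peak composition `α` of `n`. -/
noncomputable def PYQS (n : ℕ) (α : List ℕ) : MvPowerSeries ℕ ℤ :=
  ∑ᶠ T ∈ SPYCTset α, Kqs n (compOf n (PeakSet (DesWord (wY α T))))

/-! ### Auxiliary development -/

section AuxBasic

variable {α : List ℕ} {T : ℕ × ℕ → ℕ}

lemma maxPart_cons (b : ℕ) (l : List ℕ) : maxPart (b :: l) = max b (maxPart l) := rfl

lemma le_maxPart {a : ℕ} (h : a ∈ α) : a ≤ maxPart α := by
  induction α with
  | nil => simp at h
  | cons b l ih =>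
    rw [maxPart_cons]
    rcases List.mem_cons.1 h with h | h
    · subst h; exact le_max_left _ _
    · exact le_trans (ih h) (le_max_right _ _)

lemma part_le_maxPart (r : ℕ) : part α r ≤ maxPart α := by
  unfold part
  rcases lt_or_ge (r - 1) α.length with h | h
  · rw [List.getD_eq_getElem _ _ h]
    exact le_maxPart (List.getElem_mem _)
  · rw [List.getD_eq_default _ _ h]
    exact Nat.zero_le _

lemma mem_cd {c r : ℕ} :
    (c, r) ∈ cd α ↔ 1 ≤ c ∧ c ≤ part α r ∧ 1 ≤ r ∧ r ≤ α.length := by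
  unfold cd
  simp only [Finset.mem_filter, Finset.mem_product, Finset.mem_Icc]
  constructor
  · rintro ⟨⟨⟨h1, h2⟩, h3, h4⟩, h5⟩; exact ⟨h1, h5, h3, h4⟩
  · rintro ⟨h1, h2, h3, h4⟩
    exact ⟨⟨⟨h1, le_trans h2 (part_le_maxPart r)⟩, h3, h4⟩, h2⟩

lemma part_pos (hpos : ∀ a ∈ α, 0 < a) {r : ℕ} (h1 : 1 ≤ r) (h2 : r ≤ α.length) :
    0 < part α r := by
  unfold part
  have h : r - 1 < α.length := by omega
  rw [List.getD_eq_getElem _ _ h]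
  exact hpos _ (List.getElem_mem _)

lemma le_length_of_part_ne_zero {r : ℕ} (h : part α r ≠ 0) : r ≤ α.length := by
  unfold part at h
  rcases lt_or_ge (r - 1) α.length with h' | h'
  · omega
  · rw [List.getD_eq_default _ _ h'] at h; omega

lemma one_mem_cd (hpos : ∀ a ∈ α, 0 < a) {r : ℕ} (h1 : 1 ≤ r) (h2 : r ≤ α.length) :
    (1, r) ∈ cd α :=
  mem_cd.2 ⟨le_rfl, part_pos hpos h1 h2, h1, h2⟩

lemma part_two_le (hpk : ∀ i, i + 1 < α.length → 1 < α.getD i 0) {r : ℕ}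
    (h1 : 1 ≤ r) (h2 : r + 1 ≤ α.length) : 2 ≤ part α r := by
  unfold part
  have := hpk (r - 1) (by omega)
  omega

lemma two_mem_cd (hpk : ∀ i, i + 1 < α.length → 1 < α.getD i 0) {r : ℕ}
    (h1 : 1 ≤ r) (h2 : r + 1 ≤ α.length) : (2, r) ∈ cd α :=
  mem_cd.2 ⟨by omega, part_two_le hpk h1 h2, h1, by omega⟩

lemma sum_range_getD (l : List ℕ) : ∑ j ∈ Finset.range l.length, l.getD j 0 = l.sum := by
  induction l with
  | nil => simp
  | cons a l ih =>
    rw [List.length_cons, Finset.sum_range_succ']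
    simp only [List.getD_cons_succ, List.getD_cons_zero, List.sum_cons]
    rw [ih]; omega

lemma sum_Icc_part : ∑ r ∈ Finset.Icc 1 α.length, part α r = α.sum := by
  rw [← sum_range_getD α]
  refine Finset.sum_nbij' (fun r => r - 1) (fun j => j + 1) ?_ ?_ ?_ ?_ ?_
  · intro a ha; simp only [Finset.mem_Icc] at ha; simp only [Finset.mem_range]; omega
  · intro a ha; simp only [Finset.mem_range] at ha; simp only [Finset.mem_Icc]; omega
  · intro a ha; simp only [Finset.mem_Icc] at ha; show a - 1 + 1 = a; omega
  · intro a ha; show a + 1 - 1 = a; omega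
  · intro a ha; rfl

lemma card_cd : (cd α).card = α.sum := by
  rw [Finset.card_eq_sum_card_fiberwise (f := fun p => p.2) (t := Finset.Icc 1 α.length)
    (fun p hp => by
      rcases p with ⟨c, r⟩
      rw [Finset.mem_coe, mem_cd] at hp
      simp only [Finset.mem_coe, Finset.mem_Icc]
      exact ⟨hp.2.2.1, hp.2.2.2⟩)]
  rw [← sum_Icc_part]
  refine Finset.sum_congr rfl fun r hr => ?_
  have : (cd α).filter (fun p => p.2 = r) = (Finset.Icc 1 (part α r)).image (fun c => (c, r)) := by
    ext ⟨c', r'⟩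
    simp only [Finset.mem_filter, Finset.mem_image, Finset.mem_Icc, mem_cd]
    simp only [Finset.mem_Icc] at hr
    constructor
    · rintro ⟨⟨h1, h2, h3, h4⟩, rfl⟩; exact ⟨c', ⟨h1, h2⟩, rfl⟩
    · rintro ⟨c, ⟨h1, h2⟩, h3⟩
      obtain ⟨rfl, rfl⟩ := Prod.mk.injEq .. ▸ h3
      exact ⟨⟨h1, h2, hr.1, hr.2⟩, rfl⟩
  rw [this, Finset.card_image_of_injOn (fun a _ b _ h => by simpa using h)]
  simp

lemma base_lt {B a b c d : ℕ} (hb : b < B) (hd : d < B) :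
    a * B + b < c * B + d ↔ a < c ∨ (a = c ∧ b < d) := by
  constructor
  · intro h
    rcases lt_trichotomy a c with h' | h' | h'
    · exact Or.inl h'
    · subst h'; exact Or.inr ⟨rfl, by omega⟩
    · exfalso
      have h1 : (c + 1) * B ≤ a * B := Nat.mul_le_mul_right B h'
      rw [Nat.add_mul, one_mul] at h1
      omega
  · rintro (h | ⟨rfl, h⟩)
    · have h1 : (a + 1) * B ≤ c * B := Nat.mul_le_mul_right B h
      rw [Nat.add_mul, one_mul] at h1
      omega
    · omega

lemma base_inj {B a b c d : ℕ} (hb : b < B) (hd : d < B)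
    (h : a * B + b = c * B + d) : a = c ∧ b = d := by
  have h1 : ¬ (a * B + b < c * B + d) := by omega
  have h2 : ¬ (c * B + d < a * B + b) := by omega
  rw [base_lt hb hd] at h1
  rw [base_lt hd hb] at h2
  constructor
  · omega
  · omega

end AuxBasic

section Rank
set_option linter.unusedSectionVars false

variable {γ : Type} [DecidableEq γ]

/-- Rank of `p` in `S` according to the key `g`. -/
def rankIn (S : Finset γ) (g : γ → ℕ) (p : γ) : ℕ := (S.filter fun q => g q ≤ g p).card

lemma rankIn_pos {S : Finset γ} {g : γ → ℕ} {p : γ} (hp : p ∈ S) : 1 ≤ rankIn S g p := by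
  have : p ∈ S.filter fun q => g q ≤ g p := Finset.mem_filter.2 ⟨hp, le_rfl⟩
  have h2 := Finset.card_pos.2 ⟨p, this⟩
  unfold rankIn
  omega

lemma rankIn_le {S : Finset γ} {g : γ → ℕ} (p : γ) : rankIn S g p ≤ S.card :=
  Finset.card_filter_le _ _

lemma rankIn_lt_of_lt {S : Finset γ} {g : γ → ℕ} {p q : γ} (hq : q ∈ S)
    (h : g p < g q) : rankIn S g p < rankIn S g q := by
  apply Finset.card_lt_card
  constructor
  · intro x hx
    rw [Finset.mem_filter] at hx ⊢
    exact ⟨hx.1, le_trans hx.2 (le_of_lt h)⟩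
  · intro hsub
    have := hsub (Finset.mem_filter.2 ⟨hq, le_rfl⟩)
    rw [Finset.mem_filter] at this
    omega

lemma rankIn_lt_iff {S : Finset γ} {g : γ → ℕ} {p q : γ} (hp : p ∈ S) (hq : q ∈ S) :
    rankIn S g p < rankIn S g q ↔ g p < g q := by
  constructor
  · intro h
    rcases lt_trichotomy (g p) (g q) with h' | h' | h'
    · exact h'
    · exfalso; unfold rankIn at h; rw [h'] at h; omega
    · exact absurd (rankIn_lt_of_lt hp h') (by omega)
  · exact rankIn_lt_of_lt hq

lemma rankIn_le_iff {S : Finset γ} {g : γ → ℕ} {p q : γ} (hp : p ∈ S) (hq : q ∈ S) :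
    rankIn S g p ≤ rankIn S g q ↔ g p ≤ g q := by
  rcases le_or_gt (g p) (g q) with h | h
  · rcases eq_or_lt_of_le h with h' | h'
    · constructor
      · intro _; exact h
      · intro _; unfold rankIn; rw [h']
    · exact ⟨fun _ => h, fun _ => le_of_lt ((rankIn_lt_iff hp hq).2 h')⟩
  · have := (rankIn_lt_iff hq hp).2 h
    constructor
    · omega
    · omega

lemma rankIn_inj {S : Finset γ} {g : γ → ℕ}
    (hinj : ∀ p ∈ S, ∀ q ∈ S, g p = g q → p = q) {p q : γ} (hp : p ∈ S) (hq : q ∈ S)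
    (h : rankIn S g p = rankIn S g q) : p = q := by
  apply hinj p hp q hq
  rcases lt_trichotomy (g p) (g q) with h' | h' | h'
  · exact absurd ((rankIn_lt_iff hp hq).2 h') (by omega)
  · exact h'
  · exact absurd ((rankIn_lt_iff hq hp).2 h') (by omega)

lemma rankIn_surj_aux :
    ∀ (m : ℕ) (S : Finset γ) (g : γ → ℕ),
      (∀ p ∈ S, ∀ q ∈ S, g p = g q → p = q) → S.card = m →
      ∀ k, 1 ≤ k → k ≤ m → ∃ p ∈ S, rankIn S g p = k := by
  intro m
  induction m with
  | zero => intro S g _ _ k h1 h2; omega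
  | succ m ih =>
    intro S g hinj hn k h1 h2
    have hne : S.Nonempty := Finset.card_pos.1 (by omega)
    obtain ⟨p0, hp0, hmax⟩ := Finset.exists_max_image S g hne
    rcases eq_or_lt_of_le h2 with hk | hk
    · refine ⟨p0, hp0, ?_⟩
      unfold rankIn
      rw [Finset.filter_true_of_mem (fun q hq => hmax q hq), hn, hk]
    · have hcard : (S.erase p0).card = m := by
        rw [Finset.card_erase_of_mem hp0, hn]; omega
      have hinj' : ∀ p ∈ S.erase p0, ∀ q ∈ S.erase p0, g p = g q → p = q :=
        fun p hp q hq h => hinj p (Finset.mem_of_mem_erase hp) q (Finset.mem_of_mem_erase hq) h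
      obtain ⟨p, hp, hrk⟩ := ih (S.erase p0) g hinj' hcard k h1 (by omega)
      have hpS : p ∈ S := Finset.mem_of_mem_erase hp
      have hgp : g p < g p0 := by
        have h1 := hmax p hpS
        rcases eq_or_lt_of_le h1 with h' | h'
        · exact absurd (hinj p hpS p0 hp0 h') (Finset.ne_of_mem_erase hp)
        · exact h'
      refine ⟨p, hpS, ?_⟩
      rw [← hrk]
      unfold rankIn
      congr 1
      ext q
      simp only [Finset.mem_filter, Finset.mem_erase]
      constructor
      · rintro ⟨hq, hle⟩
        refine ⟨⟨?_, hq⟩, hle⟩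
        rintro rfl; omega
      · rintro ⟨⟨_, hq⟩, hle⟩; exact ⟨hq, hle⟩

lemma rankIn_surj (S : Finset γ) (g : γ → ℕ)
    (hinj : ∀ p ∈ S, ∀ q ∈ S, g p = g q → p = q) :
    ∀ k, 1 ≤ k → k ≤ S.card → ∃ p ∈ S, rankIn S g p = k :=
  rankIn_surj_aux S.card S g hinj rfl

end Rank
section Words
set_option linter.unusedSectionVars false

variable {α : List ℕ} {T : ℕ × ℕ → ℕ}

/-- Base used for encoding boxes as numbers. -/
def BB (α : List ℕ) : ℕ := maxPart α + α.length + 1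

/-- Column reading key. -/
def keyC (α : List ℕ) (p : ℕ × ℕ) : ℕ := p.1 * BB α + p.2

/-- Row reading key. -/
def keyR (α : List ℕ) (p : ℕ × ℕ) : ℕ := (α.length - p.2) * BB α + p.1

lemma fst_lt_BB {p : ℕ × ℕ} (hp : p ∈ cd α) : p.1 < BB α := by
  rcases p with ⟨c, r⟩
  rw [mem_cd] at hp
  have := le_trans hp.2.1 (part_le_maxPart r)
  unfold BB; omega

lemma snd_lt_BB {p : ℕ × ℕ} (hp : p ∈ cd α) : p.2 < BB α := by
  rcases p with ⟨c, r⟩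
  rw [mem_cd] at hp
  unfold BB; omega

lemma keyC_lt_iff {p q : ℕ × ℕ} (hp : p ∈ cd α) (hq : q ∈ cd α) :
    keyC α p < keyC α q ↔ p.1 < q.1 ∨ (p.1 = q.1 ∧ p.2 < q.2) :=
  base_lt (snd_lt_BB hp) (snd_lt_BB hq)

lemma keyR_lt_iff {p q : ℕ × ℕ} (hp : p ∈ cd α) (hq : q ∈ cd α) :
    keyR α p < keyR α q ↔
      (α.length - p.2) < (α.length - q.2) ∨ ((α.length - p.2) = (α.length - q.2) ∧ p.1 < q.1) :=
  base_lt (fst_lt_BB hp) (fst_lt_BB hq)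

lemma keyC_inj {p q : ℕ × ℕ} (hp : p ∈ cd α) (hq : q ∈ cd α)
    (h : keyC α p = keyC α q) : p = q := by
  obtain ⟨h1, h2⟩ := base_inj (snd_lt_BB hp) (snd_lt_BB hq) h
  exact Prod.ext h1 h2

lemma keyR_inj {p q : ℕ × ℕ} (hp : p ∈ cd α) (hq : q ∈ cd α)
    (h : keyR α p = keyR α q) : p = q := by
  obtain ⟨h1, h2⟩ := base_inj (fst_lt_BB hp) (fst_lt_BB hq) h
  rcases p with ⟨c, r⟩; rcases q with ⟨c', r'⟩
  rw [mem_cd] at hp hq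
  simp only at h1 h2
  have : r = r' := by omega
  exact Prod.ext h2 this

lemma keyC_bound {p : ℕ × ℕ} (hp : p ∈ cd α) : keyC α p < BB α * BB α := by
  have h1 := fst_lt_BB hp
  have h2 := snd_lt_BB hp
  unfold keyC
  have : p.1 * BB α + p.2 < (p.1 + 1) * BB α := by rw [Nat.add_mul, one_mul]; omega
  have h3 : (p.1 + 1) * BB α ≤ BB α * BB α := by
    rw [Nat.mul_comm (BB α) (BB α)]
    exact Nat.mul_le_mul_right _ (by omega)
  omega

lemma keyR_bound {p : ℕ × ℕ} (hp : p ∈ cd α) : keyR α p < BB α * BB α := by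
  have h1 := fst_lt_BB hp
  unfold keyR
  have h0 : α.length - p.2 < BB α := by unfold BB; omega
  have : (α.length - p.2) * BB α + p.1 < (α.length - p.2 + 1) * BB α := by
    rw [Nat.add_mul, one_mul]; omega
  have h3 : (α.length - p.2 + 1) * BB α ≤ BB α * BB α := by
    rw [Nat.mul_comm (BB α) (BB α)]
    exact Nat.mul_le_mul_right _ (by omega)
  omega

/-- Boxes of row `r`, left to right. -/
def rowBoxes (α : List ℕ) (r : ℕ) : List (ℕ × ℕ) :=
  (List.range (part α r)).map fun i => (i + 1, r)

/-- Boxes in row reading order. -/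
def boxesR (α : List ℕ) : List (ℕ × ℕ) :=
  ((List.range α.length).reverse.map fun j => rowBoxes α (j + 1)).flatten

/-- Boxes of column `i`, bottom to top. -/
def colBoxes (α : List ℕ) (i : ℕ) : List (ℕ × ℕ) :=
  ((List.range α.length).filter fun j => decide (i ≤ part α (j + 1))).map fun j => (i, j + 1)

/-- Boxes in column reading order. -/
def boxesC (α : List ℕ) : List (ℕ × ℕ) :=
  ((List.range (maxPart α)).map fun i => colBoxes α (i + 1)).flatten

lemma wR_eq : wR α T = (boxesR α).map T := by
  unfold wR boxesR rowBoxes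
  rw [List.map_flatten]
  congr 1
  rw [List.map_map]
  apply List.map_congr_left
  intro j _
  simp [List.map_map, Function.comp]

lemma wC_eq : wC α T = (boxesC α).map T := by
  unfold wC boxesC colBoxes colList
  rw [List.map_flatten]
  congr 1
  rw [List.map_map]
  apply List.map_congr_left
  intro i _
  simp [List.map_map, Function.comp]

lemma mem_boxesR {p : ℕ × ℕ} : p ∈ boxesR α ↔ p ∈ cd α := by
  rcases p with ⟨c, r⟩
  unfold boxesR rowBoxes
  simp only [List.mem_flatten, List.mem_map, List.mem_reverse, List.mem_range, mem_cd]
  constructor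
  · rintro ⟨l, ⟨j, hj, rfl⟩, hmem⟩
    obtain ⟨i, hi, he⟩ := List.mem_map.1 hmem
    rw [List.mem_range] at hi
    obtain ⟨rfl, rfl⟩ := Prod.mk.injEq .. ▸ he
    exact ⟨by omega, by omega, by omega, by omega⟩
  · rintro ⟨h1, h2, h3, h4⟩
    refine ⟨(List.range (part α r)).map fun i => (i + 1, r), ⟨r - 1, by omega, by rw [show r - 1 + 1 = r by omega]⟩, ?_⟩
    rw [List.mem_map]
    exact ⟨c - 1, List.mem_range.2 (by omega), by simp; omega⟩

lemma mem_boxesC {p : ℕ × ℕ} : p ∈ boxesC α ↔ p ∈ cd α := by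
  rcases p with ⟨c, r⟩
  unfold boxesC colBoxes
  simp only [List.mem_flatten, List.mem_map, List.mem_range, mem_cd]
  constructor
  · rintro ⟨l, ⟨i, hi, rfl⟩, hmem⟩
    obtain ⟨j, hj, he⟩ := List.mem_map.1 hmem
    rw [List.mem_filter, List.mem_range] at hj
    obtain ⟨rfl, rfl⟩ := Prod.mk.injEq .. ▸ he
    have := of_decide_eq_true hj.2
    exact ⟨by omega, this, by omega, by omega⟩
  · rintro ⟨h1, h2, h3, h4⟩
    have hc : c ≤ maxPart α := le_trans h2 (part_le_maxPart r)
    refine ⟨_, ⟨c - 1, by omega, rfl⟩, ?_⟩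
    rw [List.mem_map]
    refine ⟨r - 1, ?_, by simp; omega⟩
    rw [List.mem_filter, List.mem_range]
    constructor
    · omega
    · rw [decide_eq_true_eq, show c - 1 + 1 = c by omega, show r - 1 + 1 = r by omega]
      exact h2

lemma pairwise_boxesR : (boxesR α).Pairwise fun p q => keyR α p < keyR α q := by
  unfold boxesR
  rw [List.pairwise_flatten]
  constructor
  · intro l hl
    obtain ⟨j, hj, rfl⟩ := List.mem_map.1 hl
    unfold rowBoxes
    rw [List.pairwise_map]
    apply List.Pairwise.imp ?_ (List.pairwise_lt_range)
    intro a b hab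
    show (α.length - (j + 1)) * BB α + (a + 1) < (α.length - (j + 1)) * BB α + (b + 1)
    omega
  · rw [List.pairwise_map, List.pairwise_reverse]
    apply List.Pairwise.imp ?_ (List.pairwise_lt_range)
    intro a b hab p hp q hq
    unfold rowBoxes at hp hq
    obtain ⟨i, hi, rfl⟩ := List.mem_map.1 hp
    obtain ⟨i', hi', rfl⟩ := List.mem_map.1 hq
    rw [List.mem_range] at hi hi'
    have hble : b + 1 ≤ α.length := le_length_of_part_ne_zero (by omega)
    have hb1 : i + 1 < BB α :=
      lt_of_le_of_lt (by have := part_le_maxPart (α := α) (b + 1); omega)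
        (by unfold BB; omega : maxPart α < BB α)
    have hb2 : i' + 1 < BB α :=
      lt_of_le_of_lt (by have := part_le_maxPart (α := α) (a + 1); omega)
        (by unfold BB; omega : maxPart α < BB α)
    show (α.length - (b + 1)) * BB α + (i + 1) < (α.length - (a + 1)) * BB α + (i' + 1)
    rw [base_lt hb1 hb2]
    left; omega

lemma pairwise_boxesC : (boxesC α).Pairwise fun p q => keyC α p < keyC α q := by
  unfold boxesC
  rw [List.pairwise_flatten]
  constructor
  · intro l hl
    obtain ⟨i, hi, rfl⟩ := List.mem_map.1 hl
    unfold colBoxes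
    rw [List.pairwise_map]
    apply List.Pairwise.imp ?_ ((List.pairwise_lt_range).filter _)
    intro a b hab
    show (i + 1) * BB α + (a + 1) < (i + 1) * BB α + (b + 1)
    omega
  · rw [List.pairwise_map]
    apply List.Pairwise.imp ?_ (List.pairwise_lt_range)
    intro a b hab p hp q hq
    unfold colBoxes at hp hq
    obtain ⟨j, hj, rfl⟩ := List.mem_map.1 hp
    obtain ⟨j', hj', rfl⟩ := List.mem_map.1 hq
    rw [List.mem_filter, List.mem_range] at hj hj'
    have hb1 : j + 1 < BB α := by unfold BB; omega
    have hb2 : j' + 1 < BB α := by unfold BB; omega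
    show (a + 1) * BB α + (j + 1) < (b + 1) * BB α + (j' + 1)
    rw [base_lt hb1 hb2]
    left; omega

lemma indexOf_map_lt {l : List (ℕ × ℕ)} {f : ℕ × ℕ → ℕ} {T : ℕ × ℕ → ℕ}
    (hpw : l.Pairwise fun p q => f p < f q)
    (hinj : ∀ p ∈ l, ∀ q ∈ l, T p = T q → p = q) {p q : ℕ × ℕ}
    (hp : p ∈ l) (hq : q ∈ l) (hlt : f p < f q) :
    (l.map T).idxOf (T p) < (l.map T).idxOf (T q) := by
  induction l with
  | nil => simp at hp
  | cons a tl ih =>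
    rw [List.pairwise_cons] at hpw
    have hqa : q ≠ a := by
      rintro rfl
      rcases List.mem_cons.1 hp with rfl | hp'
      · omega
      · have := hpw.1 p hp'; omega
    have hTqa : T q ≠ T a := fun hc => hqa (hinj q hq a (List.mem_cons_self) hc)
    by_cases hpa : p = a
    · subst hpa
      rw [List.map_cons, List.idxOf_cons_self, List.idxOf_cons_ne _ (Ne.symm hTqa)]
      omega
    · have hTpa : T p ≠ T a := fun hc => hpa (hinj p hp a (List.mem_cons_self) hc)
      have hp' : p ∈ tl := by rcases List.mem_cons.1 hp with h | h; exact absurd h hpa; exact h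
      have hq' : q ∈ tl := by rcases List.mem_cons.1 hq with h | h; exact absurd h hqa; exact h
      rw [List.map_cons, List.idxOf_cons_ne _ (Ne.symm hTpa), List.idxOf_cons_ne _ (Ne.symm hTqa)]
      have := ih hpw.2 (fun x hx y hy hxy => hinj x (List.mem_cons_of_mem _ hx) y (List.mem_cons_of_mem _ hy) hxy) hp' hq'
      omega

/-- inverse of a standard filling -/
noncomputable def posOf (α : List ℕ) (T : ℕ × ℕ → ℕ) (k : ℕ) : ℕ × ℕ :=
  Function.invFunOn T (cd α) k

/-- descent set of a filling with respect to a key function -/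
noncomputable def DesK (α : List ℕ) (κ : ℕ × ℕ → ℕ) (T : ℕ × ℕ → ℕ) : Finset ℕ :=
  (Finset.Icc 1 (α.sum - 1)).filter fun i => κ (posOf α T (i + 1)) < κ (posOf α T i)

lemma sf_maps (hT : IsStandardFilling α T) {p : ℕ × ℕ} (hp : p ∈ cd α) :
    1 ≤ T p ∧ T p ≤ α.sum := by
  have := hT.1.mapsTo (by exact_mod_cast hp)
  rwa [Set.mem_Icc] at this

lemma sf_pos_spec (hT : IsStandardFilling α T) {k : ℕ} (h1 : 1 ≤ k) (h2 : k ≤ α.sum) :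
    posOf α T k ∈ cd α ∧ T (posOf α T k) = k := by
  have hs : k ∈ T '' (cd α : Set (ℕ × ℕ)) := hT.1.surjOn (Set.mem_Icc.2 ⟨h1, h2⟩)
  obtain ⟨p, hp, hpe⟩ := hs
  have hex : ∃ a ∈ (cd α : Set (ℕ × ℕ)), T a = k := ⟨p, hp, hpe⟩
  exact ⟨by exact_mod_cast Function.invFunOn_mem hex, Function.invFunOn_eq hex⟩

lemma sf_pos_T (hT : IsStandardFilling α T) {p : ℕ × ℕ} (hp : p ∈ cd α) :
    posOf α T (T p) = p := by
  obtain ⟨h1, h2⟩ := sf_maps hT hp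
  obtain ⟨hm, he⟩ := sf_pos_spec hT h1 h2
  exact hT.1.injOn (by exact_mod_cast hm) (by exact_mod_cast hp) he

lemma desWord_eq {l : List (ℕ × ℕ)} {κ : ℕ × ℕ → ℕ}
    (hT : IsStandardFilling α T)
    (hmem : ∀ p, p ∈ l ↔ p ∈ cd α)
    (hpw : l.Pairwise fun p q => κ p < κ q)
    (hκinj : ∀ p ∈ cd α, ∀ q ∈ cd α, κ p = κ q → p = q) :
    DesWord (l.map T) = DesK α κ T := by
  have hvmem : ∀ a, a ∈ l.map T ↔ (1 ≤ a ∧ a ≤ α.sum) := by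
    intro a
    rw [List.mem_map]
    constructor
    · rintro ⟨p, hp, rfl⟩; exact sf_maps hT ((hmem p).1 hp)
    · rintro ⟨h1, h2⟩
      obtain ⟨hm, he⟩ := sf_pos_spec hT h1 h2
      exact ⟨_, (hmem _).2 hm, he⟩
  have hinjl : ∀ p ∈ l, ∀ q ∈ l, T p = T q → p = q := fun p hp q hq he =>
    hT.1.injOn (by exact_mod_cast (hmem p).1 hp) (by exact_mod_cast (hmem q).1 hq) he
  have hidx : ∀ a b : ℕ, 1 ≤ a → a ≤ α.sum → 1 ≤ b → b ≤ α.sum → a ≠ b →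
      ((l.map T).idxOf a < (l.map T).idxOf b ↔ κ (posOf α T a) < κ (posOf α T b)) := by
    intro a b ha1 ha2 hb1 hb2 hab
    obtain ⟨hma, hea⟩ := sf_pos_spec hT ha1 ha2
    obtain ⟨hmb, heb⟩ := sf_pos_spec hT hb1 hb2
    set p := posOf α T a with hpdef
    set q := posOf α T b with hqdef
    have hpl : p ∈ l := (hmem p).2 hma
    have hql : q ∈ l := (hmem q).2 hmb
    have hpq : p ≠ q := by
      intro hc
      rw [hc] at hea
      rw [hea] at heb
      omega
    rw [← hea, ← heb]
    constructor
    · intro h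
      rcases lt_trichotomy (κ p) (κ q) with h' | h' | h'
      · exact h'
      · exact absurd (hκinj p hma q hmb h') hpq
      · exact absurd (indexOf_map_lt hpw hinjl hql hpl h') (by omega)
    · exact indexOf_map_lt hpw hinjl hpl hql
  ext i
  unfold DesWord DesK
  simp only [Finset.mem_filter, List.mem_toFinset, Finset.mem_Icc]
  constructor
  · rintro ⟨hi, hi1, hlt⟩
    rw [hvmem] at hi hi1
    refine ⟨⟨hi.1, by omega⟩, ?_⟩
    exact (hidx (i + 1) i (by omega) (by omega) hi.1 hi.2 (by omega)).1 hlt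
  · rintro ⟨⟨h1, h2⟩, hlt⟩
    have hsum : 1 ≤ α.sum := by omega
    have hi : i ∈ l.map T := (hvmem i).2 ⟨h1, by omega⟩
    have hi1 : i + 1 ∈ l.map T := (hvmem (i + 1)).2 ⟨by omega, by omega⟩
    exact ⟨hi, hi1, (hidx (i + 1) i (by omega) (by omega) h1 (by omega) (by omega)).2 hlt⟩

lemma desWord_wR (hT : IsStandardFilling α T) :
    DesWord (wR α T) = DesK α (keyR α) T := by
  rw [wR_eq]
  exact desWord_eq hT (fun p => mem_boxesR) pairwise_boxesR (fun p hp q hq => keyR_inj hp hq)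

lemma desWord_wC (hT : IsStandardFilling α T) :
    DesWord (wC α T) = DesK α (keyC α) T := by
  rw [wC_eq]
  exact desWord_eq hT (fun p => mem_boxesC) pairwise_boxesC (fun p hp q hq => keyC_inj hp hq)

end Words
section Structure
set_option linter.unusedSectionVars false

variable {α : List ℕ} {T : ℕ × ℕ → ℕ}

/-- strictness along the column covers -/
def ColStrict (α : List ℕ) (T : ℕ × ℕ → ℕ) : Prop :=
  ∀ r, (2, r) ∈ cd α → (1, r + 1) ∈ cd α → T (2, r) < T (1, r + 1)

lemma filter_Icc_eq_Icc {t : ℕ} (P : ℕ → Prop) [DecidablePred P]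
    (h : ∀ a b, 1 ≤ a → a ≤ b → b ≤ t → P b → P a) :
    ∃ s, s ≤ t ∧ (Finset.Icc 1 t).filter P = Finset.Icc 1 s := by
  induction t with
  | zero =>
    exact ⟨0, le_rfl, by rw [show Finset.Icc 1 0 = ∅ from Finset.Icc_eq_empty (by omega),
      Finset.filter_empty]⟩
  | succ t ih =>
    by_cases hP : P (t + 1)
    · refine ⟨t + 1, le_rfl, ?_⟩
      apply Finset.filter_true_of_mem
      intro x hx
      rw [Finset.mem_Icc] at hx
      exact h x (t + 1) hx.1 (by omega) le_rfl hP
    · obtain ⟨s, hs, he⟩ := ih (fun a b h1 h2 h3 hb => h a b h1 h2 (by omega) hb)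
      refine ⟨s, by omega, ?_⟩
      rw [← he]
      ext x
      simp only [Finset.mem_filter, Finset.mem_Icc]
      constructor
      · rintro ⟨⟨h1, h2⟩, h3⟩
        have : x ≠ t + 1 := by rintro rfl; exact hP h3
        exact ⟨⟨h1, by omega⟩, h3⟩
      · rintro ⟨⟨h1, h2⟩, h3⟩
        exact ⟨⟨h1, by omega⟩, h3⟩

lemma row_mono (hrow : RowsIncrease α T) {c c' r : ℕ} (h1 : 1 ≤ c) (h2 : c ≤ c')
    (hmem : (c', r) ∈ cd α) : T (c, r) ≤ T (c', r) := by
  induction c', h2 using Nat.le_induction with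
  | base => exact le_rfl
  | succ c' hc ih =>
    have hc' : (c', r) ∈ cd α := by
      rw [mem_cd] at hmem ⊢
      refine ⟨by omega, by omega, hmem.2.2⟩
    exact le_trans (ih hc') (le_of_lt (hrow c' r hc' hmem))

lemma col_mono (hpos : ∀ a ∈ α, 0 < a) (hfc : FirstColIncreases α T) {r r' : ℕ}
    (h1 : 1 ≤ r) (h2 : r ≤ r') (hmem : (1, r') ∈ cd α) : T (1, r) ≤ T (1, r') := by
  induction r', h2 using Nat.le_induction with
  | base => exact le_rfl
  | succ r' hc ih =>
    have hr' : (1, r') ∈ cd α := by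
      rw [mem_cd] at hmem
      exact one_mem_cd hpos (by omega) (by omega)
    exact le_trans (ih hr') (le_of_lt (hfc r' hr' hmem))

lemma firstCol_of (hpos : ∀ a ∈ α, 0 < a) (hpk : ∀ i, i + 1 < α.length → 1 < α.getD i 0)
    (hrow : RowsIncrease α T) (hcs : ColStrict α T) : FirstColIncreases α T := by
  intro r h1 h2
  have hr : 1 ≤ r ∧ r + 1 ≤ α.length := by
    rw [mem_cd] at h1 h2
    exact ⟨h1.2.2.1, h2.2.2.2⟩
  have h2r : (2, r) ∈ cd α := two_mem_cd hpk hr.1 hr.2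
  have e : (1 + 1 : ℕ) = 2 := rfl
  have := hrow 1 r h1 (by rw [e]; exact h2r)
  rw [e] at this
  exact lt_trans this (hcs r h2r h2)

lemma list_sum_range (m : ℕ) (f : ℕ → ℕ) :
    ((List.range m).map f).sum = ∑ j ∈ Finset.range m, f j := by
  induction m with
  | zero => simp
  | succ m ih => rw [List.range_succ, Finset.sum_range_succ, List.map_append, List.sum_append, ih]; simp

lemma card_filter_le_val (hT : IsStandardFilling α T) {k : ℕ} (h2 : k ≤ α.sum) :
    ((cd α).filter fun p => T p ≤ k).card = k := by
  have : ((cd α).filter fun p => T p ≤ k).card = (Finset.Icc 1 k).card := by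
    apply Finset.card_bij (fun p _ => T p)
    · intro p hp
      rw [Finset.mem_filter] at hp
      obtain ⟨h1, _⟩ := sf_maps hT hp.1
      rw [Finset.mem_Icc]
      exact ⟨h1, hp.2⟩
    · intro p hp q hq he
      rw [Finset.mem_filter] at hp hq
      exact hT.1.injOn (by exact_mod_cast hp.1) (by exact_mod_cast hq.1) he
    · intro v hv
      rw [Finset.mem_Icc] at hv
      obtain ⟨hm, he⟩ := sf_pos_spec hT hv.1 (le_trans hv.2 h2)
      exact ⟨posOf α T v, Finset.mem_filter.2 ⟨hm, by omega⟩, he⟩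
  rw [this, Nat.card_Icc]
  omega

lemma peakCond_of (hpos : ∀ a ∈ α, 0 < a) (hpk : ∀ i, i + 1 < α.length → 1 < α.getD i 0)
    (hT : IsStandardFilling α T) (hrow : RowsIncrease α T) (hcs : ColStrict α T) :
    PeakCond α T := by
  have hfc := firstCol_of hpos hpk hrow hcs
  intro k hk1 hk2
  obtain ⟨L, hL, hLe⟩ := filter_Icc_eq_Icc (t := α.length) (fun r => T (1, r) ≤ k)
    (fun a b h1 h2 h3 hb => le_trans (col_mono hpos hfc h1 h2 (one_mem_cd hpos (by omega) h3)) hb)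
  have hF1 : ∀ r, (1 ≤ r ∧ r ≤ L) ↔ (1 ≤ r ∧ r ≤ α.length ∧ T (1, r) ≤ k) := by
    intro r
    have h1 : r ∈ Finset.Icc 1 L ↔ r ∈ (Finset.Icc 1 α.length).filter (fun r => T (1, r) ≤ k) := by
      rw [hLe]
    simp only [Finset.mem_Icc, Finset.mem_filter] at h1
    constructor
    · intro h; obtain ⟨⟨a1, a2⟩, a3⟩ := h1.1 h; exact ⟨a1, a2, a3⟩
    · rintro ⟨a1, a2, a3⟩; exact h1.2 ⟨⟨a1, a2⟩, a3⟩
  have hrowfil : ∀ r, ∃ s, s ≤ part α r ∧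
      (Finset.Icc 1 (part α r)).filter (fun c => T (c, r) ≤ k ∧ 1 ≤ r) = Finset.Icc 1 s := by
    intro r
    apply filter_Icc_eq_Icc
    intro a b h1 h2 h3 hb
    refine ⟨le_trans (row_mono hrow h1 h2 (mem_cd.2 ⟨by omega, h3, hb.2,
      le_length_of_part_ne_zero (by omega)⟩)) hb.1, hb.2⟩
  choose ρ hρle hρeq using hrowfil
  have hF0 : ∀ r c, 1 ≤ r → ((1 ≤ c ∧ c ≤ ρ r) ↔ (1 ≤ c ∧ c ≤ part α r ∧ T (c, r) ≤ k)) := by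
    intro r c hr
    have h1 : c ∈ Finset.Icc 1 (ρ r) ↔
        c ∈ (Finset.Icc 1 (part α r)).filter (fun c => T (c, r) ≤ k ∧ 1 ≤ r) := by rw [hρeq]
    simp only [Finset.mem_Icc, Finset.mem_filter] at h1
    constructor
    · intro h; obtain ⟨⟨a1, a2⟩, a3, _⟩ := h1.1 h; exact ⟨a1, a2, a3⟩
    · rintro ⟨a1, a2, a3⟩; exact h1.2 ⟨⟨a1, a2⟩, a3, hr⟩
  have hF2 : ∀ r, 1 ≤ r → r ≤ L → 1 ≤ ρ r := by
    intro r h1 h2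
    have hT1 := ((hF1 r).1 ⟨h1, h2⟩)
    have : 1 ≤ part α r := part_pos hpos h1 hT1.2.1
    exact ((hF0 r 1 h1).2 ⟨le_rfl, this, hT1.2.2⟩).2
  have hF3 : ∀ r, 1 ≤ r → r > L → ρ r = 0 := by
    intro r h1 h2
    by_contra hc
    have h3 : 1 ≤ ρ r := by omega
    have := (hF0 r 1 h1).1 ⟨le_rfl, h3⟩
    have hrL := (hF1 r).2 ⟨h1, le_length_of_part_ne_zero (by omega),
      le_trans (row_mono hrow le_rfl this.1 (mem_cd.2 ⟨this.1, this.2.1, h1,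
        le_length_of_part_ne_zero (by omega)⟩)) this.2.2⟩
    omega
  have hF4 : ∀ r, 1 ≤ r → r < L → 2 ≤ ρ r := by
    intro r h1 h2
    have hrL := (hF1 (r + 1)).1 ⟨by omega, by omega⟩
    have h2r : (2, r) ∈ cd α := two_mem_cd hpk h1 (by omega)
    have h1r : (1, r + 1) ∈ cd α := one_mem_cd hpos (by omega) hrL.2.1
    have hlt := hcs r h2r h1r
    rw [mem_cd] at h2r
    exact ((hF0 r 2 h1).2 ⟨by omega, h2r.2.1, by omega⟩).2
  set β := (List.range L).map (fun j => ρ (j + 1)) with hβdef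
  have hβlen : β.length = L := by rw [hβdef, List.length_map, List.length_range]
  have hβpart : ∀ r, 1 ≤ r → r ≤ L → part β r = ρ r := by
    intro r h1 h2
    unfold part
    rw [hβdef, List.getD_eq_getElem _ _ (by rw [List.length_map, List.length_range]; omega)]
    rw [List.getElem_map, List.getElem_range]
    congr 1
    omega
  refine ⟨β, ⟨⟨?_, ?_⟩, ?_⟩, ?_⟩
  · -- positivity
    intro a ha
    rw [hβdef, List.mem_map] at ha
    obtain ⟨j, hj, rfl⟩ := ha
    rw [List.mem_range] at hj
    exact hF2 (j + 1) (by omega) (by omega)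
  · -- sum = k
    rw [hβdef, list_sum_range]
    have e1 : ∑ j ∈ Finset.range L, ρ (j + 1) = ∑ r ∈ Finset.Icc 1 L, ρ r := by
      refine Finset.sum_nbij' (fun j => j + 1) (fun r => r - 1) ?_ ?_ ?_ ?_ ?_
      · intro a ha; simp only [Finset.mem_range] at ha; simp only [Finset.mem_Icc]; omega
      · intro a ha; simp only [Finset.mem_Icc] at ha; simp only [Finset.mem_range]; omega
      · intro a ha; show a + 1 - 1 = a; omega
      · intro a ha; simp only [Finset.mem_Icc] at ha; show a - 1 + 1 = a; omega
      · intro a ha; rfl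
    have e2 : ∑ r ∈ Finset.Icc 1 L, ρ r = ∑ r ∈ Finset.Icc 1 α.length, ρ r := by
      apply Finset.sum_subset
      · intro x hx
        simp only [Finset.mem_Icc] at hx ⊢
        omega
      · intro x hx hx'
        simp only [Finset.mem_Icc] at hx hx'
        exact hF3 x hx.1 (by omega)
    have e3 : ∑ r ∈ Finset.Icc 1 α.length, ρ r = ((cd α).filter fun p => T p ≤ k).card := by
      rw [Finset.card_eq_sum_card_fiberwise (f := fun p => p.2) (t := Finset.Icc 1 α.length)
        (fun p hp => by
          rw [Finset.mem_coe, Finset.mem_filter] at hp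
          rcases p with ⟨c, r⟩
          rw [mem_cd] at hp
          simp only [Finset.mem_coe, Finset.mem_Icc]
          exact ⟨hp.1.2.2.1, hp.1.2.2.2⟩)]
      refine Finset.sum_congr rfl fun r hr => ?_
      simp only [Finset.mem_Icc] at hr
      have : ((cd α).filter fun p => T p ≤ k).filter (fun p => p.2 = r) =
          (Finset.Icc 1 (ρ r)).image (fun c => (c, r)) := by
        ext ⟨c', r'⟩
        simp only [Finset.mem_filter, Finset.mem_image, Finset.mem_Icc, mem_cd]
        constructor
        · rintro ⟨⟨⟨a1, a2, a3, a4⟩, a5⟩, h6⟩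
          subst h6
          exact ⟨c', (hF0 _ c' a3).2 ⟨a1, a2, a5⟩, rfl⟩
        · rintro ⟨c, hc, h3⟩
          obtain ⟨rfl, rfl⟩ := Prod.mk.injEq .. ▸ h3
          obtain ⟨b1, b2, b3⟩ := (hF0 _ c hr.1).1 hc
          exact ⟨⟨⟨b1, b2, hr.1, hr.2⟩, b3⟩, rfl⟩
      rw [this, Finset.card_image_of_injOn (fun a _ b _ h => by simpa using h)]
      simp
    rw [e1, e2, e3, card_filter_le_val hT hk2]
  · -- peak condition
    intro i hi
    rw [hβlen] at hi
    rw [hβdef, List.getD_eq_getElem _ _ (by rw [List.length_map, List.length_range]; omega)]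
    rw [List.getElem_map, List.getElem_range]
    have := hF4 (i + 1) (by omega) (by omega)
    omega
  · -- the filtered diagram is cd β
    ext ⟨c, r⟩
    rw [Finset.mem_filter, mem_cd (α := β), mem_cd (α := α), hβlen]
    constructor
    · rintro ⟨⟨a1, a2, a3, a4⟩, a5⟩
      have hcρ := (hF0 r c a3).2 ⟨a1, a2, a5⟩
      have hrL : r ≤ L := by
        by_contra hc
        have := hF3 r a3 (by omega)
        omega
      exact ⟨a1, by rw [hβpart r a3 hrL]; exact hcρ.2, a3, hrL⟩
    · rintro ⟨a1, a2, a3, a4⟩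
      rw [hβpart r a3 a4] at a2
      obtain ⟨b1, b2, b3⟩ := (hF0 r c a3).1 ⟨a1, a2⟩
      have hrlen := ((hF1 r).1 ⟨a3, a4⟩).2.1
      exact ⟨⟨a1, b2, a3, hrlen⟩, b3⟩

lemma colStrict_of_spit (hS : IsSPIT α T) : ColStrict α T := by
  intro r h2r h1r
  have hT := hS.1.1
  obtain ⟨hk1, hk2⟩ := sf_maps hT h1r
  obtain ⟨β, hβ, he⟩ := hS.2 (T (1, r + 1)) hk1 hk2
  have h1 : (1, r + 1) ∈ (cd α).filter (fun p => T p ≤ T (1, r + 1)) :=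
    Finset.mem_filter.2 ⟨h1r, le_rfl⟩
  rw [he] at h1
  rw [mem_cd] at h1
  have hrr : 1 ≤ r := by rw [mem_cd] at h2r; exact h2r.2.2.1
  have h2 : (2, r) ∈ cd β := two_mem_cd hβ.2 hrr h1.2.2.2
  rw [← he, Finset.mem_filter] at h2
  have hne : T (2, r) ≠ T (1, r + 1) := by
    intro hc
    have := hT.1.injOn (by exact_mod_cast h2.1) (by exact_mod_cast h1r) hc
    simp at this
  omega

lemma isSPIT_iff (hpos : ∀ a ∈ α, 0 < a) (hpk : ∀ i, i + 1 < α.length → 1 < α.getD i 0)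
    (hT : IsStandardFilling α T) :
    IsSPIT α T ↔ RowsIncrease α T ∧ ColStrict α T := by
  constructor
  · intro h
    exact ⟨h.1.2.1, colStrict_of_spit h⟩
  · rintro ⟨hrow, hcs⟩
    exact ⟨⟨hT, hrow, firstCol_of hpos hpk hrow hcs⟩, peakCond_of hpos hpk hT hrow hcs⟩

end Structure
section Main
set_option linter.unusedSectionVars false
set_option linter.unusedVariables false

variable {α : List ℕ} {T : ℕ × ℕ → ℕ}

lemma finite_bounded (α : List ℕ) (n : ℕ) :
    Set.Finite {f : ℕ × ℕ → ℕ | (∀ p, p ∉ cd α → f p = 0) ∧ ∀ p ∈ cd α, f p ≤ n} := by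
  have hsub : {f : ℕ × ℕ → ℕ | (∀ p, p ∉ cd α → f p = 0) ∧ ∀ p ∈ cd α, f p ≤ n} ⊆
      Set.range (fun (g : {p // p ∈ cd α} → Fin (n + 1)) (p : ℕ × ℕ) =>
        if h : p ∈ cd α then (g ⟨p, h⟩ : ℕ) else 0) := by
    rintro f ⟨h0, hb⟩
    refine ⟨fun q => ⟨f q, by have := hb q q.2; omega⟩, ?_⟩
    funext p
    by_cases h : p ∈ cd α
    · simp [h]
    · simp [h, h0 p h]
  exact Set.Finite.subset (Set.finite_range _) hsub

lemma spitset_finite (α : List ℕ) : (SPITset α).Finite := by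
  apply (finite_bounded α α.sum).subset
  rintro T hT
  exact ⟨hT.1.1.2, fun p hp => (sf_maps hT.1.1 hp).2⟩

noncomputable def SPITF (α : List ℕ) : Finset (ℕ × ℕ → ℕ) := (spitset_finite α).toFinset

lemma mem_SPITF {α : List ℕ} {T : ℕ × ℕ → ℕ} : T ∈ SPITF α ↔ IsSPIT α T :=
  Set.Finite.mem_toFinset _

/-- index of the block of `D` containing `k` -/
def blockOf (D : Finset ℕ) (k : ℕ) : ℕ := (D.filter (· < k)).card

lemma blockOf_mono (D : Finset ℕ) {k k' : ℕ} (h : k ≤ k') : blockOf D k ≤ blockOf D k' :=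
  Finset.card_le_card (fun x hx => by
    rw [Finset.mem_filter] at hx ⊢
    exact ⟨hx.1, by omega⟩)

lemma blockOf_le (D : Finset ℕ) (k : ℕ) : blockOf D k ≤ k := by
  have : D.filter (· < k) ⊆ Finset.range k := fun x hx => by
    rw [Finset.mem_filter] at hx
    rw [Finset.mem_range]
    exact hx.2
  have := Finset.card_le_card this
  rwa [Finset.card_range] at this

lemma blockOf_succ (D : Finset ℕ) (k : ℕ) :
    blockOf D (k + 1) = blockOf D k + (if k ∈ D then 1 else 0) := by
  unfold blockOf
  by_cases h : k ∈ D
  · rw [if_pos h]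
    have he : D.filter (· < k + 1) = insert k (D.filter (· < k)) := by
      ext x
      simp only [Finset.mem_filter, Finset.mem_insert]
      constructor
      · rintro ⟨hx, hlt⟩
        rcases (by omega : x = k ∨ x < k) with h' | h'
        · exact Or.inl h'
        · exact Or.inr ⟨hx, h'⟩
      · rintro (rfl | ⟨hx, h'⟩)
        · exact ⟨h, by omega⟩
        · exact ⟨hx, by omega⟩
    rw [he, Finset.card_insert_of_notMem (by
      rw [Finset.mem_filter]
      rintro ⟨_, h'⟩
      omega)]
  · rw [if_neg h]
    have he : D.filter (· < k + 1) = D.filter (· < k) := by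
      ext x
      simp only [Finset.mem_filter]
      constructor
      · rintro ⟨hx, hlt⟩
        refine ⟨hx, ?_⟩
        have : x ≠ k := by rintro rfl; exact h hx
        omega
      · rintro ⟨hx, hlt⟩
        exact ⟨hx, by omega⟩
    rw [he]
    omega

lemma blockOf_succ_eq (D : Finset ℕ) {k : ℕ} (h : k ∉ D) : blockOf D (k + 1) = blockOf D k := by
  rw [blockOf_succ, if_neg h]
  omega

/-- the set of `(Q,strictness)`-partitions with the right fibre sizes -/
def ASet (α : List ℕ) (D : Finset ℕ) : Set (ℕ × ℕ → ℕ) :=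
  {f | (∀ p, p ∉ cd α → f p = 0) ∧
       (∀ c r, (c, r) ∈ cd α → (c + 1, r) ∈ cd α → f (c, r) ≤ f (c + 1, r)) ∧
       (∀ r, (2, r) ∈ cd α → (1, r + 1) ∈ cd α → f (2, r) < f (1, r + 1)) ∧
       (∀ t, ((cd α).filter fun p => f p = t).card =
         ((Finset.Icc 1 α.sum).filter fun k => blockOf D k = t).card)}

lemma aset_finite (α : List ℕ) (D : Finset ℕ) : (ASet α D).Finite := by
  apply (finite_bounded α α.sum).subset
  rintro f ⟨h0, _, _, hfib⟩
  refine ⟨h0, fun p hp => ?_⟩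
  by_contra hc
  push_neg at hc
  have h1 : 0 < ((cd α).filter fun q => f q = f p).card :=
    Finset.card_pos.2 ⟨p, Finset.mem_filter.2 ⟨hp, rfl⟩⟩
  rw [hfib] at h1
  obtain ⟨k, hk⟩ := Finset.card_pos.1 h1
  rw [Finset.mem_filter, Finset.mem_Icc] at hk
  have := blockOf_le D k
  omega

/-- block filling attached to a standard filling -/
def phiF (α : List ℕ) (D : Finset ℕ) (T : ℕ × ℕ → ℕ) : ℕ × ℕ → ℕ :=
  fun p => if p ∈ cd α then blockOf D (T p) else 0

/-- standard filling attached to a block filling -/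
noncomputable def psiT (α : List ℕ) (M : ℕ) (κ : ℕ × ℕ → ℕ) (f : ℕ × ℕ → ℕ) : ℕ × ℕ → ℕ :=
  fun p => if p ∈ cd α then rankIn (cd α) (fun q => f q * M + κ q) p else 0

section Kappa

variable {κ : ℕ × ℕ → ℕ} {M : ℕ} {D : Finset ℕ}

/-- hypothesis bundle -/
structure KH (α : List ℕ) (κ : ℕ × ℕ → ℕ) (M : ℕ) : Prop where
  inj : ∀ p ∈ cd α, ∀ q ∈ cd α, κ p = κ q → p = q
  row : ∀ c r, (c, r) ∈ cd α → (c + 1, r) ∈ cd α → κ (c, r) < κ (c + 1, r)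
  col : ∀ r, (2, r) ∈ cd α → (1, r + 1) ∈ cd α → κ (1, r + 1) < κ (2, r)
  bnd : ∀ p ∈ cd α, κ p < M

lemma step_mono (hκ : KH α κ M) (hT : IsStandardFilling α T) (hDes : DesK α κ T ⊆ D) {b : ℕ}
    (h1 : 1 ≤ b) (h3 : b + 1 ≤ α.sum) (hb : b ∉ D) :
    κ (posOf α T b) < κ (posOf α T (b + 1)) := by
  have hbD : b ∉ DesK α κ T := fun hc => hb (hDes hc)
  unfold DesK at hbD
  rw [Finset.mem_filter, Finset.mem_Icc] at hbD
  push_neg at hbD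
  have hnot := hbD ⟨h1, by omega⟩
  obtain ⟨hmb, heb⟩ := sf_pos_spec hT h1 (by omega)
  obtain ⟨hmb1, heb1⟩ := sf_pos_spec hT (k := b + 1) (by omega) h3
  have hne : posOf α T b ≠ posOf α T (b + 1) := by
    intro hc
    rw [hc, heb1] at heb
    omega
  have : κ (posOf α T b) ≠ κ (posOf α T (b + 1)) := fun hc => hne (hκ.inj _ hmb _ hmb1 hc)
  omega

lemma chain_mono (hκ : KH α κ M) (hT : IsStandardFilling α T) (hDes : DesK α κ T ⊆ D) {a : ℕ}
    (h1 : 1 ≤ a) : ∀ b, a < b → b ≤ α.sum → blockOf D a = blockOf D b →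
    κ (posOf α T a) < κ (posOf α T b) := by
  intro b
  induction b with
  | zero => omega
  | succ b ih =>
    intro h2 h3 hblk
    rcases (by omega : a = b ∨ a < b) with rfl | hab
    · have ha : a ∉ D := by
        intro hc
        have := blockOf_succ D a
        rw [if_pos hc] at this
        omega
      exact step_mono hκ hT hDes h1 h3 ha
    · have hm1 : blockOf D a ≤ blockOf D b := blockOf_mono D (le_of_lt hab)
      have hm2 : blockOf D b ≤ blockOf D (b + 1) := blockOf_mono D (by omega)
      have hbb : b ∉ D := by
        intro hc
        have := blockOf_succ D b
        rw [if_pos hc] at this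
        omega
      have hstep := step_mono hκ hT hDes (b := b) (by omega) h3 hbb
      have := ih hab (by omega) (by omega)
      omega

lemma phi_mem (hκ : KH α κ M) (hT : IsSPIT α T) (hDes : DesK α κ T ⊆ D) : phiF α D T ∈ ASet α D := by
  have hstd := hT.1.1
  have hrow := hT.1.2.1
  have hcs := colStrict_of_spit hT
  refine ⟨fun p hp => by simp only [phiF]; rw [if_neg hp], ?_, ?_, ?_⟩
  · intro c r hp hq
    simp only [phiF]; rw [if_pos hp, if_pos hq]
    exact blockOf_mono D (le_of_lt (hrow c r hp hq))
  · intro r hp hq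
    simp only [phiF]; rw [if_pos hp, if_pos hq]
    have hlt := hcs r hp hq
    have hble : blockOf D (T (2, r)) ≤ blockOf D (T (1, r + 1)) := blockOf_mono D (le_of_lt hlt)
    rcases lt_or_eq_of_le hble with h | h
    · exact h
    · exfalso
      obtain ⟨ha1, ha2⟩ := sf_maps hstd hp
      obtain ⟨hb1, hb2⟩ := sf_maps hstd hq
      have := chain_mono hκ hstd hDes ha1 _ hlt hb2 h
      rw [sf_pos_T hstd hp, sf_pos_T hstd hq] at this
      have := hκ.col r hp hq
      omega
  · intro t
    apply Finset.card_bij (fun p _ => T p)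
    · intro p hp
      rw [Finset.mem_filter] at hp
      obtain ⟨hp1, hp2⟩ := hp
      simp only [phiF] at hp2; rw [if_pos hp1] at hp2
      obtain ⟨h1, h2⟩ := sf_maps hstd hp1
      rw [Finset.mem_filter, Finset.mem_Icc]
      exact ⟨⟨h1, h2⟩, hp2⟩
    · intro p hp q hq he
      rw [Finset.mem_filter] at hp hq
      exact hstd.1.injOn (by exact_mod_cast hp.1) (by exact_mod_cast hq.1) he
    · intro k hk
      rw [Finset.mem_filter, Finset.mem_Icc] at hk
      obtain ⟨⟨h1, h2⟩, h3⟩ := hk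
      obtain ⟨hm, he⟩ := sf_pos_spec hstd h1 h2
      refine ⟨posOf α T k, Finset.mem_filter.2 ⟨hm, ?_⟩, he⟩
      simp only [phiF]; rw [if_pos hm, he]
      exact h3

lemma psiT_apply_mem {f : ℕ × ℕ → ℕ} {p : ℕ × ℕ} (hp : p ∈ cd α) :
    psiT α M κ f p = rankIn (cd α) (fun q => f q * M + κ q) p := by
  unfold psiT
  rw [if_pos hp]

lemma psi_standard (hκ : KH α κ M) {f : ℕ × ℕ → ℕ} (hf : f ∈ ASet α D) :
    IsStandardFilling α (psiT α M κ f) := by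
  have hinj : ∀ p ∈ cd α, ∀ q ∈ cd α,
      (fun q => f q * M + κ q) p = (fun q => f q * M + κ q) q → p = q := by
    intro p hp q hq he
    simp only at he
    obtain ⟨h1, h2⟩ := base_inj (hκ.bnd p hp) (hκ.bnd q hq) he
    exact hκ.inj p hp q hq h2
  constructor
  · refine ⟨?_, ?_, ?_⟩
    · intro p hp
      have hp' : p ∈ cd α := by exact_mod_cast hp
      rw [Set.mem_Icc]
      unfold psiT
      rw [if_pos hp']
      refine ⟨rankIn_pos hp', ?_⟩
      have := rankIn_le (S := cd α) (g := fun q => f q * M + κ q) p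
      rwa [card_cd] at this
    · intro p hp q hq he
      have hp' : p ∈ cd α := by exact_mod_cast hp
      have hq' : q ∈ cd α := by exact_mod_cast hq
      unfold psiT at he
      rw [if_pos hp', if_pos hq'] at he
      exact rankIn_inj hinj hp' hq' he
    · intro k hk
      rw [Set.mem_Icc] at hk
      obtain ⟨p, hp, hr⟩ := rankIn_surj (cd α) (fun q => f q * M + κ q) hinj k hk.1
        (by rw [card_cd]; exact hk.2)
      refine ⟨p, by exact_mod_cast hp, ?_⟩
      unfold psiT
      rw [if_pos hp, hr]
  · intro p hp
    unfold psiT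
    rw [if_neg hp]

lemma psi_rows (hκ : KH α κ M) {f : ℕ × ℕ → ℕ} (hf : f ∈ ASet α D) : RowsIncrease α (psiT α M κ f) := by
  intro c r hp hq
  unfold psiT
  rw [if_pos hp, if_pos hq]
  rw [rankIn_lt_iff hp hq]
  rw [base_lt (hκ.bnd _ hp) (hκ.bnd _ hq)]
  rcases lt_or_eq_of_le (hf.2.1 c r hp hq) with h | h
  · exact Or.inl h
  · exact Or.inr ⟨h, hκ.row c r hp hq⟩

lemma psi_colstrict (hκ : KH α κ M) {f : ℕ × ℕ → ℕ} (hf : f ∈ ASet α D) : ColStrict α (psiT α M κ f) := by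
  intro r hp hq
  unfold psiT
  rw [if_pos hp, if_pos hq]
  rw [rankIn_lt_iff hp hq]
  rw [base_lt (hκ.bnd _ hp) (hκ.bnd _ hq)]
  exact Or.inl (hf.2.2.1 r hp hq)

lemma cnt_eq {f : ℕ × ℕ → ℕ} (hf : f ∈ ASet α D) (t : ℕ) :
    ((cd α).filter fun q => f q < t).card =
      ((Finset.Icc 1 α.sum).filter fun j => blockOf D j < t).card := by
  induction t with
  | zero => simp
  | succ t ih =>
    have e1 : (cd α).filter (fun q => f q < t + 1) =
        (cd α).filter (fun q => f q < t) ∪ (cd α).filter (fun q => f q = t) := by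
      ext q
      simp only [Finset.mem_filter, Finset.mem_union]
      constructor
      · rintro ⟨hq, hlt⟩
        rcases (by omega : f q < t ∨ f q = t) with h | h
        · exact Or.inl ⟨hq, h⟩
        · exact Or.inr ⟨hq, h⟩
      · rintro (⟨hq, h⟩ | ⟨hq, h⟩) <;> exact ⟨hq, by omega⟩
    have e2 : (Finset.Icc 1 α.sum).filter (fun j => blockOf D j < t + 1) =
        (Finset.Icc 1 α.sum).filter (fun j => blockOf D j < t) ∪
          (Finset.Icc 1 α.sum).filter (fun j => blockOf D j = t) := by
      ext j
      simp only [Finset.mem_filter, Finset.mem_union]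
      constructor
      · rintro ⟨hq, hlt⟩
        rcases (by omega : blockOf D j < t ∨ blockOf D j = t) with h | h
        · exact Or.inl ⟨hq, h⟩
        · exact Or.inr ⟨hq, h⟩
      · rintro (⟨hq, h⟩ | ⟨hq, h⟩) <;> exact ⟨hq, by omega⟩
    have d1 : Disjoint ((cd α).filter (fun q => f q < t)) ((cd α).filter (fun q => f q = t)) := by
      rw [Finset.disjoint_left]
      intro q h1 h2
      rw [Finset.mem_filter] at h1 h2
      omega
    have d2 : Disjoint ((Finset.Icc 1 α.sum).filter (fun j => blockOf D j < t))
        ((Finset.Icc 1 α.sum).filter (fun j => blockOf D j = t)) := by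
      rw [Finset.disjoint_left]
      intro q h1 h2
      rw [Finset.mem_filter] at h1 h2
      omega
    rw [e1, e2, Finset.card_union_of_disjoint d1, Finset.card_union_of_disjoint d2, ih,
      hf.2.2.2 t]

lemma psi_block (hκ : KH α κ M) {f : ℕ × ℕ → ℕ} (hf : f ∈ ASet α D) {k : ℕ} (h1 : 1 ≤ k) (h2 : k ≤ α.sum) :
    f (posOf α (psiT α M κ f) k) = blockOf D k := by
  have hstd := psi_standard hκ hf
  obtain ⟨hm, he⟩ := sf_pos_spec hstd h1 h2
  set g := fun q => f q * M + κ q with hg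
  set p := posOf α (psiT α M κ f) k with hp
  have hrk : rankIn (cd α) g p = k := by
    rw [hg, ← psiT_apply_mem hm]
    exact he
  have hflele : ∀ q ∈ cd α, g q ≤ g p → f q ≤ f p := by
    intro q hq hle
    by_contra hc
    push_neg at hc
    have : g p < g q := (base_lt (hκ.bnd _ hm) (hκ.bnd _ hq)).2 (Or.inl hc)
    omega
  have hlb : ((cd α).filter fun q => f q < f p).card < k := by
    rw [← hrk]
    apply Finset.card_lt_card
    constructor
    · intro q hq
      rw [Finset.mem_filter] at hq ⊢
      refine ⟨hq.1, le_of_lt ?_⟩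
      exact (base_lt (hκ.bnd _ hq.1) (hκ.bnd _ hm)).2 (Or.inl hq.2)
    · intro hsub
      have := hsub (Finset.mem_filter.2 ⟨hm, le_rfl⟩)
      rw [Finset.mem_filter] at this
      omega
  have hub : k ≤ ((cd α).filter fun q => f q < f p + 1).card := by
    rw [← hrk]
    apply Finset.card_le_card
    intro q hq
    rw [Finset.mem_filter] at hq ⊢
    have := hflele q hq.1 hq.2
    exact ⟨hq.1, by omega⟩
  have hlb' : ((Finset.Icc 1 α.sum).filter fun j => blockOf D j < blockOf D k).card < k := by
    have hsub : (Finset.Icc 1 α.sum).filter (fun j => blockOf D j < blockOf D k) ⊆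
        Finset.Icc 1 (k - 1) := by
      intro j hj
      rw [Finset.mem_filter, Finset.mem_Icc] at hj
      rw [Finset.mem_Icc]
      have : j < k := by
        by_contra hc
        push_neg at hc
        have := blockOf_mono D hc
        omega
      omega
    have := Finset.card_le_card hsub
    rw [Nat.card_Icc] at this
    omega
  have hub' : k ≤ ((Finset.Icc 1 α.sum).filter fun j => blockOf D j < blockOf D k + 1).card := by
    have hsub : Finset.Icc 1 k ⊆
        (Finset.Icc 1 α.sum).filter (fun j => blockOf D j < blockOf D k + 1) := by
      intro j hj
      rw [Finset.mem_Icc] at hj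
      rw [Finset.mem_filter, Finset.mem_Icc]
      have := blockOf_mono D hj.2
      exact ⟨⟨hj.1, by omega⟩, by omega⟩
    have := Finset.card_le_card hsub
    rw [Nat.card_Icc] at this
    omega
  have hmono : ∀ t t', t ≤ t' →
      ((cd α).filter fun q => f q < t).card ≤ ((cd α).filter fun q => f q < t').card := by
    intro t t' h
    apply Finset.card_le_card
    intro q hq
    rw [Finset.mem_filter] at hq ⊢
    exact ⟨hq.1, by omega⟩
  by_contra hne
  rcases lt_or_gt_of_ne hne with hlt | hlt
  · have h1' := hmono (f p + 1) (blockOf D k) (by omega)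
    have e2 := cnt_eq hf (blockOf D k)
    omega
  · have h1' := hmono (blockOf D k + 1) (f p) (by omega)
    have e2 := cnt_eq hf (blockOf D k + 1)
    omega

lemma psi_des (hκ : KH α κ M) {f : ℕ × ℕ → ℕ} (hf : f ∈ ASet α D) : DesK α κ (psiT α M κ f) ⊆ D := by
  intro i hi
  unfold DesK at hi
  rw [Finset.mem_filter, Finset.mem_Icc] at hi
  obtain ⟨⟨h1, h2⟩, hlt⟩ := hi
  by_contra hiD
  have hstd := psi_standard hκ hf
  have hblk : blockOf D (i + 1) = blockOf D i := blockOf_succ_eq D hiD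
  have e1 := psi_block hκ hf (k := i) h1 (by omega)
  have e2 := psi_block hκ hf (k := i + 1) (by omega) (by omega)
  obtain ⟨hm1, he1⟩ := sf_pos_spec hstd (k := i) h1 (by omega)
  obtain ⟨hm2, he2⟩ := sf_pos_spec hstd (k := i + 1) (by omega) (by omega)
  have hfeq : f (posOf α (psiT α M κ f) i) = f (posOf α (psiT α M κ f) (i + 1)) := by
    rw [e1, e2, hblk]
  have hr1 : rankIn (cd α) (fun q => f q * M + κ q) (posOf α (psiT α M κ f) i) = i := by
    rw [← psiT_apply_mem hm1]
    exact he1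
  have hr2 : rankIn (cd α) (fun q => f q * M + κ q)
      (posOf α (psiT α M κ f) (i + 1)) = i + 1 := by
    rw [← psiT_apply_mem hm2]
    exact he2
  have hklt : f (posOf α (psiT α M κ f) i) * M + κ (posOf α (psiT α M κ f) i) <
      f (posOf α (psiT α M κ f) (i + 1)) * M + κ (posOf α (psiT α M κ f) (i + 1)) := by
    have := (rankIn_lt_iff (g := fun q => f q * M + κ q) hm1 hm2).1 (by rw [hr1, hr2]; omega)
    simpa using this
  rw [base_lt (hκ.bnd _ hm1) (hκ.bnd _ hm2)] at hklt
  rcases hklt with h | ⟨_, h⟩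
  · omega
  · omega

lemma psi_phi (hκ : KH α κ M) (hpos : ∀ a ∈ α, 0 < a) (hT : IsSPIT α T) (hDes : DesK α κ T ⊆ D) :
    psiT α M κ (phiF α D T) = T := by
  have hstd := hT.1.1
  funext p
  by_cases hp : p ∈ cd α
  · unfold psiT
    rw [if_pos hp]
    have key : ∀ q ∈ cd α,
        ((phiF α D T q * M + κ q ≤ phiF α D T p * M + κ p) ↔ T q ≤ T p) := by
      intro q hq
      have hgen : ∀ x ∈ cd α, ∀ y ∈ cd α, T x < T y →
          phiF α D T x * M + κ x < phiF α D T y * M + κ y := by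
        intro x hx y hy hlt
        simp only [phiF]; rw [if_pos hx, if_pos hy]
        rw [base_lt (hκ.bnd _ hx) (hκ.bnd _ hy)]
        rcases lt_or_eq_of_le (blockOf_mono D (le_of_lt hlt)) with h | h
        · exact Or.inl h
        · refine Or.inr ⟨h, ?_⟩
          obtain ⟨ha1, ha2⟩ := sf_maps hstd hx
          obtain ⟨hb1, hb2⟩ := sf_maps hstd hy
          have := chain_mono hκ hstd hDes ha1 _ hlt hb2 h
          rwa [sf_pos_T hstd hx, sf_pos_T hstd hy] at this
      constructor
      · intro hle
        by_contra hc
        push_neg at hc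
        have := hgen p hp q hq hc
        omega
      · intro hle
        rcases lt_or_eq_of_le hle with h | h
        · exact le_of_lt (hgen q hq p hp h)
        · have : q = p := hstd.1.injOn (by exact_mod_cast hq) (by exact_mod_cast hp) h
          rw [this]
    have he : (cd α).filter (fun q => phiF α D T q * M + κ q ≤ phiF α D T p * M + κ p) =
        (cd α).filter (fun q => T q ≤ T p) := by
      ext q
      rw [Finset.mem_filter, Finset.mem_filter]
      constructor
      · rintro ⟨hq, hle⟩
        exact ⟨hq, (key q hq).1 hle⟩
      · rintro ⟨hq, hle⟩
        exact ⟨hq, (key q hq).2 hle⟩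
    show ((cd α).filter fun q => phiF α D T q * M + κ q ≤ phiF α D T p * M + κ p).card = T p
    rw [he, card_filter_le_val hstd (sf_maps hstd hp).2]
  · unfold psiT
    rw [if_neg hp, hstd.2 p hp]

lemma phi_psi (hκ : KH α κ M) {f : ℕ × ℕ → ℕ} (hf : f ∈ ASet α D) : phiF α D (psiT α M κ f) = f := by
  have hstd := psi_standard hκ hf
  funext p
  by_cases hp : p ∈ cd α
  · simp only [phiF]; rw [if_pos hp]
    have h1 : 1 ≤ psiT α M κ f p ∧ psiT α M κ f p ≤ α.sum := sf_maps hstd hp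
    have := psi_block hκ hf h1.1 h1.2
    rw [sf_pos_T hstd hp] at this
    omega
  · rw [phiF, if_neg hp, hf.1 p hp]

lemma card_des_subset (hκ : KH α κ M) (D : Finset ℕ) (hpos : ∀ a ∈ α, 0 < a)
    (hpk : ∀ i, i + 1 < α.length → 1 < α.getD i 0) :
    ((SPITF α).filter fun T => DesK α κ T ⊆ D).card = (aset_finite α D).toFinset.card := by
  apply Finset.card_bij' (i := fun T _ => phiF α D T) (j := fun f _ => psiT α M κ f)
  · intro T hT
    rw [Finset.mem_filter, mem_SPITF] at hT
    rw [Set.Finite.mem_toFinset]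
    exact phi_mem hκ hT.1 hT.2
  · intro f hfm
    rw [Set.Finite.mem_toFinset] at hfm
    rw [Finset.mem_filter, mem_SPITF]
    constructor
    · rw [isSPIT_iff hpos hpk (psi_standard hκ hfm)]
      exact ⟨psi_rows hκ hfm, psi_colstrict hκ hfm⟩
    · exact psi_des hκ hfm
  · intro T hT
    rw [Finset.mem_filter, mem_SPITF] at hT
    exact psi_phi hκ hpos hT.1 hT.2
  · intro f hfm
    rw [Set.Finite.mem_toFinset] at hfm
    exact phi_psi hκ hfm

end Kappa

end Main
section Mobius
set_option linter.unusedSectionVars false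

lemma count_eq_of_subset_counts {X : Type} (S1 S2 : Finset X)
    (d1 : X → Finset ℕ) (d2 : X → Finset ℕ)
    (hN : ∀ D : Finset ℕ,
      (S1.filter fun x => d1 x ⊆ D).card = (S2.filter fun x => d2 x ⊆ D).card) :
    ∀ D : Finset ℕ,
      (S1.filter fun x => d1 x = D).card = (S2.filter fun x => d2 x = D).card := by
  classical
  intro D
  induction D using Finset.strongInductionOn with
  | _ D ih =>
    have hpart : ∀ (S : Finset X) (d : X → Finset ℕ),
        (S.filter fun x => d x ⊆ D).card =
          ∑ E ∈ D.powerset, (S.filter fun x => d x = E).card := by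
      intro S d
      have h1 : ∀ E ∈ D.powerset,
          ((S.filter fun x => d x ⊆ D).filter fun x => d x = E) =
            S.filter fun x => d x = E := by
        intro E hE
        rw [Finset.mem_powerset] at hE
        rw [Finset.filter_filter]
        apply Finset.filter_congr
        intro x hx
        constructor
        · rintro ⟨_, h⟩; exact h
        · rintro h; exact ⟨by rw [h]; exact hE, h⟩
      have e := Finset.card_eq_sum_card_fiberwise
        (f := d) (s := S.filter fun x => d x ⊆ D) (t := D.powerset)
        (fun x hx => Finset.mem_powerset.2 (Finset.mem_filter.1 hx).2)
      rw [e]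
      apply Finset.sum_congr rfl
      intro E hE
      rw [h1 E hE]
    have e1 := hpart S1 d1
    have e2 := hpart S2 d2
    rw [hN D] at e1
    have hs1 : ∑ E ∈ D.powerset, (S1.filter fun x => d1 x = E).card =
        (S1.filter fun x => d1 x = D).card +
          ∑ E ∈ D.powerset.erase D, (S1.filter fun x => d1 x = E).card :=
      (Finset.add_sum_erase _ _ (Finset.mem_powerset_self D)).symm
    have hs2 : ∑ E ∈ D.powerset, (S2.filter fun x => d2 x = E).card =
        (S2.filter fun x => d2 x = D).card +
          ∑ E ∈ D.powerset.erase D, (S2.filter fun x => d2 x = E).card :=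
      (Finset.add_sum_erase _ _ (Finset.mem_powerset_self D)).symm
    have hih : ∑ E ∈ D.powerset.erase D, (S1.filter fun x => d1 x = E).card =
        ∑ E ∈ D.powerset.erase D, (S2.filter fun x => d2 x = E).card := by
      apply Finset.sum_congr rfl
      intro E hE
      rw [Finset.mem_erase, Finset.mem_powerset] at hE
      exact ih E (hE.2.ssubset_of_ne hE.1)
    omega

end Mobius
/-- For every peak composition `α` of `n`, the quasisymmetric Schur
`Q`-function equals the `K`-generating function of standard peak immaculate tableaux
computed with the row reading word `w_r` in place of the column reading word `w_c`. -/
theorem QSQ_eq_row_reading (n : ℕ) (α : List ℕ) (hα : IsPeakComposition n α) :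
    QSQ n α = ∑ᶠ T ∈ SPITset α, Kqs n (compOf n (PeakSet (DesWord (wR α T)))) := by
  classical
  obtain ⟨⟨hpos, hsum⟩, hpk⟩ := hα
  subst hsum
  have hkC : KH α (keyC α) (BB α * BB α) := by
    refine ⟨fun p hp q hq => keyC_inj hp hq, ?_, ?_, fun p hp => keyC_bound hp⟩
    · intro c r hp hq
      rw [keyC_lt_iff hp hq]
      exact Or.inl (by omega)
    · intro r hp hq
      rw [keyC_lt_iff hq hp]
      exact Or.inl (by omega)
  have hkR : KH α (keyR α) (BB α * BB α) := by
    refine ⟨fun p hp q hq => keyR_inj hp hq, ?_, ?_, fun p hp => keyR_bound hp⟩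
    · intro c r hp hq
      rw [keyR_lt_iff hp hq]
      exact Or.inr ⟨rfl, by omega⟩
    · intro r hp hq
      rw [keyR_lt_iff hq hp]
      have h1 : r + 1 ≤ α.length := (mem_cd.1 hq).2.2.2
      exact Or.inl (by omega)
  set g : Finset ℕ → MvPowerSeries ℕ ℤ :=
    fun d => Kqs α.sum (compOf α.sum (PeakSet d)) with hg
  have hco : SPITset α = ((SPITF α : Finset (ℕ × ℕ → ℕ)) : Set (ℕ × ℕ → ℕ)) := by
    rw [SPITF, Set.Finite.coe_toFinset]
  unfold QSQ
  rw [hco, finsum_mem_coe_finset, finsum_mem_coe_finset]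
  have hL : ∑ T ∈ SPITF α, Kqs α.sum (compOf α.sum (PeakSet (DesWord (wC α T)))) =
      ∑ T ∈ SPITF α, g (DesK α (keyC α) T) := by
    apply Finset.sum_congr rfl
    intro T hT
    rw [mem_SPITF] at hT
    rw [desWord_wC hT.1.1]
  have hR : ∑ T ∈ SPITF α, Kqs α.sum (compOf α.sum (PeakSet (DesWord (wR α T)))) =
      ∑ T ∈ SPITF α, g (DesK α (keyR α) T) := by
    apply Finset.sum_congr rfl
    intro T hT
    rw [mem_SPITF] at hT
    rw [desWord_wR hT.1.1]
  rw [hL, hR]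
  have conv : ∀ κ : ℕ × ℕ → ℕ, ∑ T ∈ SPITF α, g (DesK α κ T) =
      ∑ D ∈ (Finset.Icc 1 (α.sum - 1)).powerset,
        ((SPITF α).filter fun T => DesK α κ T = D).card • g D := by
    intro κ
    rw [← Finset.sum_fiberwise_of_maps_to (g := fun T => DesK α κ T)
      (t := (Finset.Icc 1 (α.sum - 1)).powerset)
      (fun T _ => Finset.mem_powerset.2 (Finset.filter_subset _ _))
      (fun T => g (DesK α κ T))]
    apply Finset.sum_congr rfl
    intro D hD
    calc ∑ T ∈ (SPITF α).filter (fun T => DesK α κ T = D), g (DesK α κ T)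
        = ∑ T ∈ (SPITF α).filter (fun T => DesK α κ T = D), g D :=
          Finset.sum_congr rfl (fun T hT => by rw [(Finset.mem_filter.1 hT).2])
      _ = ((SPITF α).filter fun T => DesK α κ T = D).card • g D := Finset.sum_const _
  rw [conv (keyC α), conv (keyR α)]
  have key : ∀ D : Finset ℕ, ((SPITF α).filter fun T => DesK α (keyC α) T = D).card =
      ((SPITF α).filter fun T => DesK α (keyR α) T = D).card := by
    apply count_eq_of_subset_counts
    intro D
    rw [card_des_subset hkC D hpos hpk, card_des_subset hkR D hpos hpk]
  apply Finset.sum_congr rfl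
  intro D hD
  rw [key D]

end PaperSPIT
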